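/- arXiv:2001.08409 — 7 statements merged into one kernel-verified Lean document; each statement's English description precedes it below -/
import Mathlib

section
/- Let (A_t)_{t=0}^T and (B_t)_{t=0}^T be integer sequences satisfying the staircase condition and let t* ∈ {1,...,T} satisfy A_{t*−1} < B_{t*}. Define t_A = max{t ∈ {1,...,T} : A_t = A_{t*−1}} + 1 and t_B = min{t ∈ {1,...,T} : B_t = B_{t*}}. Define A*_t = A_t for t < t_A and A*_t = A_t − 1 for t ≥ t_A; similarly B*_t = B_t for t < t_B and B*_t = B_t − 1 for t ≥ t_B. Then the sequences (A*_t) and (B*_t) (with A*_0 = B*_0 = 0) satisfy the staircase condition. -/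
def Staircase (T : ℕ) (Z : ℕ → ℤ) : Prop :=
  Z 0 = 0 ∧ ∀ t ∈ Finset.Icc 1 T, Z (t - 1) ≤ Z t ∧ Z t ≤ Z (t - 1) + 1

def Binary (T : ℕ) (x : ℕ → ℤ) : Prop :=
  ∀ t ∈ Finset.Icc 1 T, x t = 0 ∨ x t = 1

def Feasible (T : ℕ) (A B : ℕ → ℤ) (x : ℕ → ℤ) : Prop :=
  Binary T x ∧ ∀ t ∈ Finset.Icc 1 T,
    A t ≤ ∑ i ∈ Finset.Icc 1 t, x i ∧ ∑ i ∈ Finset.Icc 1 t, x i ≤ B t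

noncomputable def cost (T : ℕ) (P : ℕ → ℝ) (x : ℕ → ℤ) : ℝ :=
  ∑ t ∈ Finset.Icc 1 T, P t * (x t : ℝ)

lemma stair_nonneg (T : ℕ) (Z : ℕ → ℤ) (h : Staircase T Z) :
    ∀ t, t ≤ T → 0 ≤ Z t := by
  intro t
  induction t with
  | zero => intro _; simp [h.1]
  | succ n ih =>
    intro hn
    have hs := h.2 (n + 1) (Finset.mem_Icc.mpr ⟨by omega, hn⟩)
    simp only [Nat.add_sub_cancel] at hs
    have := ih (by omega)
    linarith [hs.1]

theorem stmt3 (T : ℕ) (A B : ℕ → ℤ)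
    (hA : Staircase T A) (hB : Staircase T B)
    (ts : ℕ) (hts : ts ∈ Finset.Icc 1 T) (hlt : A (ts - 1) < B ts)
    (hne : {t : ℕ | t ∈ Finset.Icc 1 T ∧ A t = A (ts - 1)}.Nonempty)
    (tA tB : ℕ)
    (htA : tA = sSup {t : ℕ | t ∈ Finset.Icc 1 T ∧ A t = A (ts - 1)} + 1)
    (htB : tB = sInf {t : ℕ | t ∈ Finset.Icc 1 T ∧ B t = B ts}) :
    Staircase T (fun t => if t < tA then A t else A t - 1) ∧
    Staircase T (fun t => if t < tB then B t else B t - 1) := by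
  obtain ⟨hA0, hAstep⟩ := hA
  obtain ⟨hB0, hBstep⟩ := hB
  rw [Finset.mem_Icc] at hts
  obtain ⟨hts1, htsT⟩ := hts
  -- the A part
  have hbddA : BddAbove {t : ℕ | t ∈ Finset.Icc 1 T ∧ A t = A (ts - 1)} :=
    ⟨T, fun x hx => (Finset.mem_Icc.mp hx.1).2⟩
  have hmemA := Nat.sSup_mem hne hbddA
  set m := sSup {t : ℕ | t ∈ Finset.Icc 1 T ∧ A t = A (ts - 1)} with hm
  obtain ⟨hm1, hmA⟩ := hmemA
  rw [Finset.mem_Icc] at hm1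
  -- the B part
  have hneB : {t : ℕ | t ∈ Finset.Icc 1 T ∧ B t = B ts}.Nonempty :=
    ⟨ts, Finset.mem_Icc.mpr ⟨hts1, htsT⟩, rfl⟩
  have hmemB := Nat.sInf_mem hneB
  set k := sInf {t : ℕ | t ∈ Finset.Icc 1 T ∧ B t = B ts} with hk
  obtain ⟨hk1, hkB⟩ := hmemB
  rw [Finset.mem_Icc] at hk1
  constructor
  · refine ⟨by simp only [htA]; rw [if_pos (by omega)]; exact hA0, ?_⟩
    intro t ht
    rw [Finset.mem_Icc] at ht
    have hstep := hAstep t (Finset.mem_Icc.mpr ht)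
    subst htA
    by_cases h1 : t < m + 1
    · simp only []
      rw [if_pos h1, if_pos (by omega)]
      exact hstep
    · by_cases h2 : t - 1 < m + 1
      · -- t = m + 1, the jump point
        have htm : t = m + 1 := by omega
        simp only []
        rw [if_neg h1, if_pos h2]
        have hAm1 : A (m + 1) ≠ A (ts - 1) := by
          intro hcon
          have : m + 1 ∈ {t : ℕ | t ∈ Finset.Icc 1 T ∧ A t = A (ts - 1)} :=
            ⟨Finset.mem_Icc.mpr ⟨by omega, by omega⟩, hcon⟩
          have := le_csSup hbddA this
          omega
        have hst : A m ≤ A (m + 1) ∧ A (m + 1) ≤ A m + 1 := by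
          have := hAstep (m + 1) (Finset.mem_Icc.mpr ⟨by omega, by omega⟩)
          simpa using this
        have : A (m + 1) = A m + 1 := by
          rcases hst with ⟨h3, h4⟩
          rcases lt_or_eq_of_le h3 with h5 | h5
          · omega
          · exact absurd (h5.symm.trans hmA) hAm1
        have ht1 : t - 1 = m := by omega
        rw [ht1, htm]
        constructor <;> linarith
      · simp only []
        rw [if_neg h1, if_neg h2]
        omega
  · refine ⟨by simp only [htB]; rw [if_pos (by omega)]; exact hB0, ?_⟩
    intro t ht
    rw [Finset.mem_Icc] at ht
    have hstep := hBstep t (Finset.mem_Icc.mpr ht)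
    subst htB
    by_cases h1 : t < k
    · simp only []
      rw [if_pos h1, if_pos (by omega)]
      exact hstep
    · by_cases h2 : t - 1 < k
      · -- t = k, the jump point
        have htk : t = k := by omega
        simp only []
        rw [if_neg h1, if_pos h2]
        have hBk : B k = B (k - 1) + 1 := by
          by_cases hkk : k = 1
          · -- B 0 = 0, need B 1 ≥ 1
            have hnn : 0 ≤ A (ts - 1) :=
              stair_nonneg T A ⟨hA0, hAstep⟩ (ts - 1) (by omega)
            have hBts : 1 ≤ B ts := by omega
            rw [hkk]
            simp only [Nat.sub_self]  -- might not simplify; handle below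
            have hs := hBstep 1 (Finset.mem_Icc.mpr ⟨le_refl 1, by omega⟩)
            simp only [Nat.sub_self] at hs
            rw [hB0] at hs ⊢
            have : B k = B ts := hkB
            rw [hkk] at this
            omega
          · have hkm : k - 1 ∈ Finset.Icc 1 T := Finset.mem_Icc.mpr ⟨by omega, by omega⟩
            have hs := hBstep k (Finset.mem_Icc.mpr ⟨hk1.1, hk1.2⟩)
            have hne' : B (k - 1) ≠ B ts := by
              intro hcon
              have : k - 1 ∈ {t : ℕ | t ∈ Finset.Icc 1 T ∧ B t = B ts} := ⟨hkm, hcon⟩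
              have := Nat.sInf_le this
              omega
            rcases lt_or_eq_of_le hs.1 with h5 | h5
            · omega
            · exact absurd (h5.trans hkB) hne'
        rw [htk]
        constructor <;> linarith [hBk]
      · simp only []
        rw [if_neg h1, if_neg h2]
        omega
end

section
/- Let (A_t)_{t=0}^T and (B_t)_{t=0}^T be integer staircase sequences and let t* ∈ {1,...,T} with A_{t*−1} < B_{t*}. With t_A, t_B, (A*_t), (B*_t) defined as in the update rule (t_A = max{t : A_t = A_{t*−1}}+1, t_B = min{t : B_t = B_{t*}}, A*_t = A_t − [t ≥ t_A], B*_t = B_t − [t ≥ t_B]), for every 0-1 sequence (x_t)_{t=1}^T with x_{t*} = 1 the following are equivalent: (i) A_t ≤ Σ_{i=1}^t x_i ≤ B_t for all t ∈ {1,...,T}; (ii) A*_t ≤ Σ_{i=1, i≠t*}^t x_i ≤ B*_t for all t ∈ {1,...,T}. -/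
lemma staircase_mono {T : ℕ} {Z : ℕ → ℤ} (h : Staircase T Z)
    {s t : ℕ} (hst : s ≤ t) (htT : t ≤ T) : Z s ≤ Z t := by
  induction t with
  | zero => have : s = 0 := by omega
            simp [this]
  | succ n ih =>
    rcases Nat.lt_or_ge s (n + 1) with h1 | h2
    · have h3 : Z n ≤ Z (n + 1) := by
        simpa using (h.2 (n + 1) (Finset.mem_Icc.mpr ⟨by omega, htT⟩)).1
      have h4 := ih (by omega) (by omega)
      omega
    · have : s = n + 1 := by omega
      simp [this]

theorem stmt4 (T : ℕ) (A B : ℕ → ℤ)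
    (hA : Staircase T A) (hB : Staircase T B)
    (ts : ℕ) (hts : ts ∈ Finset.Icc 1 T) (hlt : A (ts - 1) < B ts)
    (hne : {t : ℕ | t ∈ Finset.Icc 1 T ∧ A t = A (ts - 1)}.Nonempty)
    (tA tB : ℕ)
    (htA : tA = sSup {t : ℕ | t ∈ Finset.Icc 1 T ∧ A t = A (ts - 1)} + 1)
    (htB : tB = sInf {t : ℕ | t ∈ Finset.Icc 1 T ∧ B t = B ts})
    (x : ℕ → ℤ) (hx : Binary T x) (hxts : x ts = 1) :
    (∀ t ∈ Finset.Icc 1 T,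
        A t ≤ ∑ i ∈ Finset.Icc 1 t, x i ∧ ∑ i ∈ Finset.Icc 1 t, x i ≤ B t) ↔
    (∀ t ∈ Finset.Icc 1 T,
        (if t < tA then A t else A t - 1) ≤ ∑ i ∈ (Finset.Icc 1 t).erase ts, x i ∧
        ∑ i ∈ (Finset.Icc 1 t).erase ts, x i ≤ (if t < tB then B t else B t - 1)) := by
  obtain ⟨hts1, htsT⟩ := Finset.mem_Icc.mp hts
  set SA := {t : ℕ | t ∈ Finset.Icc 1 T ∧ A t = A (ts - 1)} with hSAdef
  set SB := {t : ℕ | t ∈ Finset.Icc 1 T ∧ B t = B ts} with hSBdef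
  have hbddA : BddAbove SA := ⟨T, fun y hy => (Finset.mem_Icc.mp hy.1).2⟩
  have hsupmem : sSup SA ∈ SA := Nat.sSup_mem hne hbddA
  have hsup_le_T : sSup SA ≤ T := (Finset.mem_Icc.mp hsupmem.1).2
  have hAsup : A (sSup SA) = A (ts - 1) := hsupmem.2
  have htsB : ts ∈ SB := ⟨Finset.mem_Icc.mpr ⟨hts1, htsT⟩, rfl⟩
  have hinfmem : sInf SB ∈ SB := Nat.sInf_mem ⟨ts, htsB⟩
  have htB_le : tB ≤ ts := htB ▸ Nat.sInf_le htsB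
  have htB1 : 1 ≤ tB := by
    have := (Finset.mem_Icc.mp hinfmem.1).1; omega
  have hBtB : B tB = B ts := by rw [htB]; exact hinfmem.2
  -- tA ≥ ts
  have htA_ge : ts ≤ tA := by
    rcases Nat.lt_or_ge ts 2 with h | h
    · omega
    · have hmem : ts - 1 ∈ SA := ⟨Finset.mem_Icc.mpr ⟨by omega, by omega⟩, rfl⟩
      have := le_csSup hbddA hmem
      omega
  have hAlt : ∀ t, t < tA → t ≤ T → A t ≤ A (ts - 1) := by
    intro t h1 h2
    have hle : t ≤ sSup SA := by omega
    calc A t ≤ A (sSup SA) := staircase_mono hA hle hsup_le_T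
      _ = A (ts - 1) := hAsup
  have hxnn : ∀ i ∈ Finset.Icc 1 T, (0 : ℤ) ≤ x i := by
    intro i hi; rcases hx i hi with h | h <;> omega
  have hSmono : ∀ s t : ℕ, s ≤ t → t ≤ T →
      (∑ i ∈ Finset.Icc 1 s, x i) ≤ ∑ i ∈ Finset.Icc 1 t, x i := by
    intro s t hst htT
    apply Finset.sum_le_sum_of_subset_of_nonneg (Finset.Icc_subset_Icc_right hst)
    intro i hi _
    exact hxnn i (Finset.mem_Icc.mpr ⟨(Finset.mem_Icc.mp hi).1, le_trans (Finset.mem_Icc.mp hi).2 htT⟩)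
  have hSts : (∑ i ∈ Finset.Icc 1 ts, x i) = (∑ i ∈ Finset.Icc 1 (ts - 1), x i) + 1 := by
    have h1 : ts = ts - 1 + 1 := by omega
    rw [h1, Finset.sum_Icc_succ_top (by omega), ← h1, hxts]
  have herase : ∀ t : ℕ, (∑ i ∈ (Finset.Icc 1 t).erase ts, x i)
      = (∑ i ∈ Finset.Icc 1 t, x i) - (if ts ≤ t then 1 else 0) := by
    intro t
    by_cases h : ts ≤ t
    · rw [if_pos h, Finset.sum_erase_eq_sub (Finset.mem_Icc.mpr ⟨hts1, h⟩), hxts]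
    · rw [if_neg h, Finset.erase_eq_of_notMem (fun hc => h (Finset.mem_Icc.mp hc).2)]
      ring
  constructor
  · intro h t ht
    obtain ⟨ht1, htT⟩ := Finset.mem_Icc.mp ht
    obtain ⟨hl, hu⟩ := h t ht
    have hkey : A (ts - 1) ≤ ∑ i ∈ Finset.Icc 1 (ts - 1), x i := by
      rcases Nat.lt_or_ge ts 2 with h2 | h2
      · have h3 : ts - 1 = 0 := by omega
        simp [h3, hA.1]
      · exact (h (ts - 1) (Finset.mem_Icc.mpr ⟨by omega, by omega⟩)).1
    rw [herase t]
    by_cases h2 : ts ≤ t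
    · rw [if_pos h2]
      constructor
      · by_cases h1 : t < tA
        · rw [if_pos h1]
          have hA1 := hAlt t h1 htT
          have hS1 := hSmono ts t h2 htT
          omega
        · rw [if_neg h1]
          omega
      · have h3 : ¬ t < tB := by omega
        rw [if_neg h3]
        omega
    · rw [if_neg h2]
      constructor
      · have h1 : t < tA := by omega
        rw [if_pos h1]
        omega
      · by_cases h3 : t < tB
        · rw [if_pos h3]
          omega
        · rw [if_neg h3]
          have hBmono : B tB ≤ B t := staircase_mono hB (by omega) htT
          have hS1 := hSmono t (ts - 1) (by omega) (by omega)
          have hu2 := (h ts (Finset.mem_Icc.mpr ⟨hts1, htsT⟩)).2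
          omega
  · intro h t ht
    obtain ⟨ht1, htT⟩ := Finset.mem_Icc.mp ht
    obtain ⟨hl, hu⟩ := h t ht
    rw [herase t] at hl hu
    constructor
    · split_ifs at hl <;> omega
    · split_ifs at hu <;> omega
end

section
/- Let (A_t)_{t=0}^T, (B_t)_{t=0}^T be integer staircase sequences with A_t ≤ B_t for all t, and (P_t)_{t=1}^T real prices. Say t satisfies the greedy condition if A_{t−1} < B_t and (A_{t−1} < A_T or P_t < 0). Suppose some time interval satisfies the greedy condition, and let t* be a time interval satisfying it with minimal price P_{t*}. Then there exists an optimal feasible 0-1 solution (x_t) with x_{t*} = 1; i.e., a feasible solution with x_{t*} = 1 whose cost Σ_t P_t x_t is at most the cost of every feasible solution. -/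
open Finset

lemma stair_mono {T : ℕ} {Z : ℕ → ℤ} (hZ : Staircase T Z) :
    ∀ t, t ≤ T → ∀ s, s ≤ t → Z s ≤ Z t := by
  intro t
  induction t with
  | zero => intro _ s hs; simp [Nat.le_zero.mp hs]
  | succ n ih =>
    intro h s hs
    rcases Nat.eq_or_lt_of_le hs with rfl | hlt
    · exact le_rfl
    · have h1 := (hZ.2 (n+1) (by simp [Finset.mem_Icc]; omega)).1
      simp at h1
      exact le_trans (ih (by omega) s (by omega)) h1

lemma sum_Icc_step (f : ℕ → ℤ) {t : ℕ} (h : 1 ≤ t) :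
    ∑ i ∈ Icc 1 t, f i = (∑ i ∈ Icc 1 (t-1), f i) + f t := by
  obtain ⟨n, rfl⟩ : ∃ n, t = n + 1 := ⟨t-1, by omega⟩
  simp [Finset.sum_Icc_succ_top (by omega : 1 ≤ n+1)]

lemma sum_swap_eq {y x : ℕ → ℤ} {ts t' : ℕ}
    (hx : ∀ t, x t = y t + (if t = ts then 1 else 0) + (if t = t' then -1 else 0))
    (hts1 : 1 ≤ ts) (ht'1 : 1 ≤ t') (t : ℕ) :
    ∑ i ∈ Icc 1 t, x i = (∑ i ∈ Icc 1 t, y i)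
      + (if ts ≤ t then 1 else 0) + (if t' ≤ t then -1 else 0) := by
  simp only [hx, Finset.sum_add_distrib, Finset.sum_ite_eq', Finset.mem_Icc]
  congr 2 <;> [skip; congr 1] <;> simp [hts1, ht'1]

lemma sum_add_eq {y x : ℕ → ℤ} {ts : ℕ}
    (hx : ∀ t, x t = y t + (if t = ts then 1 else 0))
    (hts1 : 1 ≤ ts) (t : ℕ) :
    ∑ i ∈ Icc 1 t, x i = (∑ i ∈ Icc 1 t, y i) + (if ts ≤ t then 1 else 0) := by
  simp only [hx, Finset.sum_add_distrib, Finset.sum_ite_eq', Finset.mem_Icc]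
  congr 1
  simp [hts1]

lemma cost_swap {T : ℕ} (P : ℕ → ℝ) {y x : ℕ → ℤ} {ts t' : ℕ} (hne : ts ≠ t')
    (hts : ts ∈ Icc 1 T) (ht' : t' ∈ Icc 1 T)
    (hx : ∀ t, x t = y t + (if t = ts then 1 else 0) + (if t = t' then -1 else 0)) :
    cost T P x = cost T P y + P ts - P t' := by
  unfold cost
  have key : ∀ t ∈ Icc 1 T, P t * (x t : ℝ)
      = P t * (y t : ℝ) + (if t = ts then P t else 0) + (if t = t' then -(P t) else 0) := by
    intro t _
    rw [hx t]
    push_cast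
    by_cases h1 : t = ts <;> by_cases h2 : t = t' <;>
      simp [h1, h2, hne, Ne.symm hne] <;> ring
  rw [Finset.sum_congr rfl key]
  rw [Finset.sum_add_distrib, Finset.sum_add_distrib, Finset.sum_ite_eq', Finset.sum_ite_eq']
  simp [hts, ht']
  ring

lemma cost_add {T : ℕ} (P : ℕ → ℝ) {y x : ℕ → ℤ} {ts : ℕ}
    (hts : ts ∈ Icc 1 T)
    (hx : ∀ t, x t = y t + (if t = ts then 1 else 0)) :
    cost T P x = cost T P y + P ts := by
  unfold cost
  have key : ∀ t ∈ Icc 1 T, P t * (x t : ℝ)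
      = P t * (y t : ℝ) + (if t = ts then P t else 0) := by
    intro t _
    rw [hx t]
    push_cast
    by_cases h1 : t = ts <;> simp [h1] <;> ring
  rw [Finset.sum_congr rfl key]
  rw [Finset.sum_add_distrib, Finset.sum_ite_eq']
  simp [hts]

lemma price_le {T : ℕ} {A B : ℕ → ℤ} {P : ℕ → ℝ} {ts : ℕ}
    (hgreedy : A (ts - 1) < B ts ∧ (A (ts - 1) < A T ∨ P ts < 0))
    (hmin : ∀ t ∈ Finset.Icc 1 T,
      (A (t - 1) < B t ∧ (A (t - 1) < A T ∨ P t < 0)) → P ts ≤ P t)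
    {t' : ℕ} (ht' : t' ∈ Finset.Icc 1 T) (h1 : A (t'-1) < B t')
    (h2 : A (t'-1) ≤ A (ts-1)) :
    P ts ≤ P t' := by
  by_contra hc; push_neg at hc
  rcases lt_or_ge (P t') 0 with hneg | hpos
  · exact absurd (hmin t' ht' ⟨h1, Or.inr hneg⟩) (not_le.mpr hc)
  · have hAT : A (ts-1) < A T := by
      rcases hgreedy.2 with h | h
      · exact h
      · linarith
    exact absurd (hmin t' ht' ⟨h1, Or.inl (lt_of_le_of_lt h2 hAT)⟩) (not_le.mpr hc)

lemma exchange {T : ℕ} {A B : ℕ → ℤ} {P : ℕ → ℝ}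
    (hA : Staircase T A) (hB : Staircase T B)
    {ts : ℕ} (hts : ts ∈ Finset.Icc 1 T)
    (hgreedy : A (ts - 1) < B ts ∧ (A (ts - 1) < A T ∨ P ts < 0))
    (hmin : ∀ t ∈ Finset.Icc 1 T,
      (A (t - 1) < B t ∧ (A (t - 1) < A T ∨ P t < 0)) → P ts ≤ P t)
    (y : ℕ → ℤ) (hy : Feasible T A B y) :
    ∃ x, Feasible T A B x ∧ x ts = 1 ∧ cost T P x ≤ cost T P y := by
  classical
  obtain ⟨hts1, htsT⟩ := Finset.mem_Icc.mp hts
  obtain ⟨hBin, hFeas⟩ := hy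
  set S : ℕ → ℤ := fun t => ∑ i ∈ Icc 1 t, y i with hSdef
  have hS0 : S 0 = 0 := by simp [hSdef]
  have hSt : ∀ t, S t = ∑ i ∈ Icc 1 t, y i := fun _ => rfl
  have hSstep : ∀ t, 1 ≤ t → S t = S (t-1) + y t := fun t ht => sum_Icc_step y ht
  have hSA : ∀ t, t ≤ T → A t ≤ S t := by
    intro t ht
    rcases Nat.eq_zero_or_pos t with rfl | htpos
    · rw [hS0, hA.1]
    · exact (hFeas t (Finset.mem_Icc.mpr ⟨htpos, ht⟩)).1
  have hSB : ∀ t, t ≤ T → S t ≤ B t := by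
    intro t ht
    rcases Nat.eq_zero_or_pos t with rfl | htpos
    · rw [hS0, hB.1]
    · exact (hFeas t (Finset.mem_Icc.mpr ⟨htpos, ht⟩)).2
  rcases hBin ts hts with hy0 | hy1
  swap
  · exact ⟨y, ⟨hBin, hFeas⟩, hy1, le_rfl⟩
  -- y ts = 0
  have hSts : S ts = S (ts-1) := by rw [hSstep ts hts1, hy0, add_zero]
  have hAle : A (ts-1) ≤ S (ts-1) := hSA (ts-1) (by omega)
  rcases eq_or_lt_of_le hAle with heq | hlt
  · -- S (ts-1) = A (ts-1)
    by_cases hex : ∃ u, ts < u ∧ u ≤ T ∧ y u = 1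
    · -- Case 2a : swap with minimal later one
      have t' := Nat.find hex
      obtain ⟨h1t', h2t', h3t'⟩ := Nat.find_spec hex
      set t' := Nat.find hex with ht'def
      have hmint' : ∀ u, ts < u → u < t' → y u = 0 := by
        intro u hu1 hu2
        have := Nat.find_min hex hu2
        push_neg at this
        rcases hBin u (Finset.mem_Icc.mpr ⟨by omega, by omega⟩) with h | h
        · exact h
        · exact absurd h (this hu1 (by omega))
      have hflat : ∀ u, ts ≤ u → u < t' → S u = S (ts-1) := by
        intro u
        induction u with
        | zero => omega
        | succ n ih =>
          intro h1 h2
          rcases Nat.eq_or_lt_of_le h1 with heq2 | hlt2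
          · rw [← heq2, hSts]
          · have hy0' : y (n+1) = 0 := hmint' (n+1) hlt2 h2
            rw [hSstep (n+1) (by omega), hy0']
            simpa using ih (by omega) (by omega)
      set x : ℕ → ℤ := fun t => if t = ts then 1 else if t = t' then 0 else y t with hxdef
      have hne : ts ≠ t' := by omega
      have hpt : ∀ t, x t = y t + (if t = ts then 1 else 0) + (if t = t' then -1 else 0) := by
        intro t
        by_cases e1 : t = ts <;> by_cases e2 : t = t' <;>
          simp [hxdef, e1, e2, hne, Ne.symm hne] <;> omega
      have hSx := sum_swap_eq hpt hts1 (by omega : 1 ≤ t')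
      have hBts_le : ∀ t, ts ≤ t → t ≤ T → B ts ≤ B t := by
        intro t h1 h2; exact stair_mono hB t h2 ts h1
      refine ⟨x, ⟨?_, ?_⟩, by simp [hxdef], ?_⟩
      · intro t ht
        by_cases e1 : t = ts
        · simp [hxdef, e1]
        · by_cases e2 : t = t'
          · simp [hxdef, e1, e2, Ne.symm hne]
          · simpa [hxdef, e1, e2] using hBin t ht
      · intro t ht
        obtain ⟨ht1, ht2⟩ := Finset.mem_Icc.mp ht
        rw [hSx t, ← hSt t]
        rcases Nat.lt_or_ge t ts with hcase | hcase
        · -- t < ts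
          rw [if_neg (by omega), if_neg (by omega)]
          have h1 := hSA t ht2
          have h2 := hSB t ht2
          omega
        rcases Nat.lt_or_ge t t' with hcase2 | hcase2
        · -- ts ≤ t < t'
          rw [if_pos hcase, if_neg (by omega)]
          have hst : S t = A (ts-1) := by rw [hflat t hcase hcase2, ← heq]
          have h1 := hSA t ht2
          have h5 : B ts ≤ B t := hBts_le t hcase ht2
          have hg := hgreedy.1
          omega
        · -- t' ≤ t
          rw [if_pos hcase, if_pos hcase2]
          have h1 := hSA t ht2
          have h2 := hSB t ht2
          omega
      · have hc := cost_swap P hne hts (Finset.mem_Icc.mpr ⟨by omega, h2t'⟩) hpt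
        have hAt' : A (t'-1) ≤ A (ts-1) := by
          have h4 : A (t'-1) ≤ S (t'-1) := hSA (t'-1) (by omega)
          have h5 : S (t'-1) = S (ts-1) := hflat (t'-1) (by omega) (by omega)
          omega
        have hBt' : A (t'-1) < B t' := by
          have h5 : B ts ≤ B t' := stair_mono hB t' h2t' ts (by omega)
          have := hgreedy.1
          omega
        have := price_le hgreedy hmin (Finset.mem_Icc.mpr ⟨by omega, h2t'⟩) hBt' hAt'
        linarith
    · -- Case 2b : add at ts
      push_neg at hex
      have hlater : ∀ u, ts < u → u ≤ T → y u = 0 := by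
        intro u h1 h2
        rcases hBin u (Finset.mem_Icc.mpr ⟨by omega, h2⟩) with h | h
        · exact h
        · exact absurd h (hex u h1 h2)
      have hflat : ∀ u, ts ≤ u → u ≤ T → S u = S (ts-1) := by
        intro u
        induction u with
        | zero => omega
        | succ n ih =>
          intro h1 h2
          rcases Nat.eq_or_lt_of_le h1 with heq2 | hlt2
          · rw [← heq2, hSts]
          · have hy0' : y (n+1) = 0 := hlater (n+1) hlt2 h2
            rw [hSstep (n+1) (by omega), hy0']
            simpa using ih (by omega) (by omega)
      have hPneg : P ts < 0 := by
        rcases hgreedy.2 with h | h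
        · exfalso
          have h1 : A T ≤ S T := hSA T le_rfl
          have h2 : S T = S (ts-1) := hflat T htsT le_rfl
          omega
        · exact h
      set x : ℕ → ℤ := fun t => if t = ts then 1 else y t with hxdef
      have hpt : ∀ t, x t = y t + (if t = ts then 1 else 0) := by
        intro t
        by_cases e1 : t = ts <;> simp [hxdef, e1] <;> omega
      have hSx := sum_add_eq hpt hts1
      refine ⟨x, ⟨?_, ?_⟩, by simp [hxdef], ?_⟩
      · intro t ht
        by_cases e1 : t = ts <;> simp [hxdef, e1]
        exact hBin t ht
      · intro t ht
        obtain ⟨ht1, ht2⟩ := Finset.mem_Icc.mp ht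
        rw [hSx t, ← hSt t]
        rcases Nat.lt_or_ge t ts with hcase | hcase
        · rw [if_neg (by omega)]
          have h1 := hSA t ht2
          have h2 := hSB t ht2
          omega
        · rw [if_pos hcase]
          have hst : S t = A (ts-1) := by rw [hflat t hcase ht2, ← heq]
          have h1 := hSA t ht2
          have h5 : B ts ≤ B t := stair_mono hB t ht2 ts hcase
          have hg := hgreedy.1
          omega
      · have hc := cost_add P hts hpt
        linarith
  · -- Case 1 : A (ts-1) < S (ts-1) : swap with an earlier one
    have hts2 : 2 ≤ ts := by
      by_contra hcon
      have : ts = 1 := by omega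
      subst this
      simp [hS0] at hlt
      rw [hA.1] at hlt
      omega
    have key : ∀ k, k ≤ ts-1 → (∀ u, k ≤ u → u ≤ ts-1 → A u < S u) →
        ∃ t', 1 ≤ t' ∧ t' ≤ ts-1 ∧ y t' = 1 ∧ ∀ u, t' ≤ u → u ≤ ts-1 → A u < S u := by
      intro k
      induction k with
      | zero =>
        intro _ h
        exfalso
        have := h 0 le_rfl (by omega)
        rw [hS0, hA.1] at this
        omega
      | succ n ih =>
        intro hk h
        by_cases hy1 : y (n+1) = 1
        · exact ⟨n+1, by omega, hk, hy1, h⟩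
        · have hy0' : y (n+1) = 0 :=
            (hBin (n+1) (Finset.mem_Icc.mpr ⟨by omega, by omega⟩)).resolve_right hy1
          apply ih (by omega)
          intro u hu1 hu2
          rcases Nat.eq_or_lt_of_le hu1 with heq2 | hlt2
          · have h6 := h (n+1) le_rfl hk
            have h7 : S (n+1) = S n + y (n+1) := by simpa using hSstep (n+1) (by omega)
            have h8 : A n ≤ A (n+1) :=
              stair_mono hA (n+1) (by omega) n (by omega)
            rw [← heq2]
            omega
          · exact h u (by omega) hu2
    obtain ⟨t', h1t', h2t', h3t', h4t'⟩ := key (ts-1) le_rfl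
      (by intro u hu1 hu2; have : u = ts - 1 := by omega
          rw [this]; exact hlt)
    set x : ℕ → ℤ := fun t => if t = ts then 1 else if t = t' then 0 else y t with hxdef
    have hne : ts ≠ t' := by omega
    have hpt : ∀ t, x t = y t + (if t = ts then 1 else 0) + (if t = t' then -1 else 0) := by
      intro t
      by_cases e1 : t = ts <;> by_cases e2 : t = t' <;>
        simp [hxdef, e1, e2, hne, Ne.symm hne] <;> omega
    have hSx := sum_swap_eq hpt hts1 h1t'
    refine ⟨x, ⟨?_, ?_⟩, by simp [hxdef], ?_⟩
    · intro t ht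
      by_cases e1 : t = ts
      · simp [hxdef, e1]
      · by_cases e2 : t = t'
        · simp [hxdef, e1, e2, Ne.symm hne]
        · simpa [hxdef, e1, e2] using hBin t ht
    · intro t ht
      obtain ⟨ht1, ht2⟩ := Finset.mem_Icc.mp ht
      rw [hSx t, ← hSt t]
      rcases Nat.lt_or_ge t t' with hcase | hcase
      · rw [if_neg (by omega), if_neg (by omega)]
        have h1 := hSA t ht2
        have h2 := hSB t ht2
        omega
      rcases Nat.lt_or_ge t ts with hcase2 | hcase2
      · -- t' ≤ t < ts
        rw [if_neg (by omega), if_pos hcase]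
        have h6 := h4t' t hcase (by omega)
        have h2 := hSB t ht2
        omega
      · rw [if_pos hcase2, if_pos (by omega)]
        have h1 := hSA t ht2
        have h2 := hSB t ht2
        omega
    · have hc := cost_swap P hne hts (Finset.mem_Icc.mpr ⟨h1t', by omega⟩) hpt
      have hAt' : A (t'-1) ≤ A (ts-1) :=
        stair_mono hA (ts-1) (by omega) (t'-1) (by omega)
      have hBt' : A (t'-1) < B t' := by
        have h4 : A (t'-1) ≤ S (t'-1) := hSA (t'-1) (by omega)
        have h5 : S t' = S (t'-1) + y t' := hSstep t' h1t'
        have h6 : S t' ≤ B t' := hSB t' (by omega)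
        omega
      have := price_le hgreedy hmin (Finset.mem_Icc.mpr ⟨h1t', by omega⟩) hBt' hAt'
      linarith

noncomputable def indv (s : Finset ℕ) : ℕ → ℤ := fun t => if t ∈ s then 1 else 0

lemma indv_norm {T : ℕ} {A B : ℕ → ℤ} (P : ℕ → ℝ) (x : ℕ → ℤ)
    (hx : Feasible T A B x) :
    ∃ s ∈ (Finset.Icc 1 T).powerset,
      Feasible T A B (indv s) ∧ (∀ t ∈ Finset.Icc 1 T, indv s t = x t) ∧
      cost T P (indv s) = cost T P x := by
  classical
  set s : Finset ℕ := (Finset.Icc 1 T).filter (fun t => x t = 1) with hsdef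
  have hmem : s ∈ (Finset.Icc 1 T).powerset :=
    Finset.mem_powerset.mpr (Finset.filter_subset _ _)
  have hagree : ∀ t ∈ Finset.Icc 1 T, indv s t = x t := by
    intro t ht
    rcases hx.1 t ht with h | h <;> simp [indv, hsdef, ht, h]
  have hsum : ∀ t, t ≤ T → ∑ i ∈ Finset.Icc 1 t, indv s i = ∑ i ∈ Finset.Icc 1 t, x i := by
    intro t ht
    refine Finset.sum_congr rfl fun i hi => ?_
    obtain ⟨h1, h2⟩ := Finset.mem_Icc.mp hi
    exact hagree i (Finset.mem_Icc.mpr ⟨h1, le_trans h2 ht⟩)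
  refine ⟨s, hmem, ⟨?_, ?_⟩, hagree, ?_⟩
  · intro t _
    by_cases h : t ∈ s <;> simp [indv, h]
  · intro t ht
    obtain ⟨h1, h2⟩ := Finset.mem_Icc.mp ht
    rw [hsum t h2]
    exact hx.2 t ht
  · unfold cost
    exact Finset.sum_congr rfl fun t ht => by rw [hagree t ht]

lemma baseline_feasible {T : ℕ} {A B : ℕ → ℤ}
    (hA : Staircase T A) (hAB : ∀ t ∈ Finset.Icc 1 T, A t ≤ B t) :
    Feasible T A B (fun t => A t - A (t - 1)) := by
  have hstep : ∀ t ∈ Finset.Icc 1 T, A (t-1) ≤ A t ∧ A t ≤ A (t-1) + 1 := hA.2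
  have htel : ∀ t, t ≤ T → ∑ i ∈ Finset.Icc 1 t, (A i - A (i-1)) = A t := by
    intro t
    induction t with
    | zero => intro _; simp [hA.1]
    | succ n ih =>
      intro h
      rw [Finset.sum_Icc_succ_top (by omega : 1 ≤ n+1), ih (by omega)]
      simp
  constructor
  · intro t ht
    have h := hstep t ht
    show A t - A (t-1) = 0 ∨ A t - A (t-1) = 1
    omega
  · intro t ht
    obtain ⟨h1, h2⟩ := Finset.mem_Icc.mp ht
    have : ∑ i ∈ Finset.Icc 1 t, (fun u => A u - A (u-1)) i
        = ∑ i ∈ Finset.Icc 1 t, (A i - A (i-1)) := rfl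
    rw [this, htel t h2]
    exact ⟨le_rfl, hAB t ht⟩

theorem stmt7 (T : ℕ) (A B : ℕ → ℤ) (P : ℕ → ℝ)
    (hA : Staircase T A) (hB : Staircase T B)
    (hAB : ∀ t ∈ Finset.Icc 1 T, A t ≤ B t)
    (ts : ℕ) (hts : ts ∈ Finset.Icc 1 T)
    (hgreedy : A (ts - 1) < B ts ∧ (A (ts - 1) < A T ∨ P ts < 0))
    (hmin : ∀ t ∈ Finset.Icc 1 T,
      (A (t - 1) < B t ∧ (A (t - 1) < A T ∨ P t < 0)) → P ts ≤ P t) :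
    ∃ x : ℕ → ℤ, Feasible T A B x ∧ x ts = 1 ∧
      ∀ y : ℕ → ℤ, Feasible T A B y → cost T P x ≤ cost T P y := by

  classical
  -- the candidate set
  set M : Finset (Finset ℕ) := (Finset.Icc 1 T).powerset.filter
    (fun s => Feasible T A B (indv s) ∧ indv s ts = 1) with hMdef
  have hne : M.Nonempty := by
    obtain ⟨x0, hx0f, hx0ts, _⟩ :=
      exchange hA hB hts hgreedy hmin _ (baseline_feasible hA hAB)
    obtain ⟨s0, hs0p, hs0f, hs0a, _⟩ := indv_norm P x0 hx0f
    exact ⟨s0, Finset.mem_filter.mpr ⟨hs0p, hs0f, by rw [hs0a ts hts, hx0ts]⟩⟩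
  obtain ⟨sm, hsm, hsmin⟩ := Finset.exists_min_image M (fun s => cost T P (indv s)) hne
  obtain ⟨-, hsmf, hsmts⟩ := Finset.mem_filter.mp hsm
  refine ⟨indv sm, hsmf, hsmts, ?_⟩
  intro y hy
  obtain ⟨x', hx'f, hx'ts, hx'c⟩ := exchange hA hB hts hgreedy hmin y hy
  obtain ⟨s', hs'p, hs'f, hs'a, hs'c⟩ := indv_norm P x' hx'f
  have hs'M : s' ∈ M := Finset.mem_filter.mpr ⟨hs'p, hs'f, by rw [hs'a ts hts, hx'ts]⟩
  calc cost T P (indv sm) ≤ cost T P (indv s') := hsmin s' hs'M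
    _ = cost T P x' := hs'c
    _ ≤ cost T P y := hx'c
end

section
/- Let (A_t)_{t=0}^T, (B_t)_{t=0}^T be integer staircase sequences and (x̄_t) a feasible 0-1 solution. Let t* ∈ {1,...,T} with x̄_{t*} = 0, A_{t*−1} < B_{t*}, and Σ_{i=1}^{t*−1} x̄_i = A_{t*−1}, and suppose t' = min{t ≥ t* : x̄_t = 1} exists. Then the sequence (x̂_t) defined by x̂_{t'} = 0, x̂_{t*} = 1, and x̂_t = x̄_t otherwise, is feasible. -/
/-!
Moving the unit of `x̄` from `t'` back to `t*` raises the partial sums by one on `[t*, t')` and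
leaves them unchanged elsewhere, so only the upper bounds on `[t*, t')` need checking. There
`x̄` vanishes, so its partial sums stay at `A_{t*-1}`, and `A_{t*-1} + 1 ≤ B_{t*} ≤ B_t` because
`B` is nondecreasing.
-/

open Finset

theorem Staircase.mono {T : ℕ} {Z : ℕ → ℤ} (h : Staircase T Z) {a b : ℕ} (hab : a ≤ b)
    (hbT : b ≤ T) : Z a ≤ Z b := by
  induction b, hab using Nat.le_induction with
  | base => rfl
  | succ n _ ih =>
    have step := (h.2 (n + 1) (mem_Icc.mpr ⟨by omega, hbT⟩)).1
    rw [Nat.add_sub_cancel] at step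
    exact (ih (by omega)).trans step

theorem sum_swap_eq_s10 {ι : Type*} [DecidableEq ι] (s : Finset ι) (x : ι → ℤ) {a b : ι}
    (hab : a ≠ b) (ha : x a = 0) (hb : x b = 1) :
    ∑ i ∈ s, (if i = b then 0 else if i = a then 1 else x i)
      = ∑ i ∈ s, x i + (if a ∈ s then 1 else 0) - (if b ∈ s then 1 else 0) := by
  have pointwise : ∀ i, (if i = b then 0 else if i = a then 1 else x i)
      = x i + (if a = i then 1 else 0) - (if b = i then 1 else 0) := by
    intro i
    by_cases hib : i = b
    · subst hib; simp [hb, hab]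
    · by_cases hia : i = a
      · subst hia; simp [ha, hib, Ne.symm hib]
      · simp [hia, hib, Ne.symm hia, Ne.symm hib]
  simp only [pointwise, sum_sub_distrib, sum_add_distrib, sum_ite_eq]

theorem sum_Icc_eq_of_eq_zero (x : ℕ → ℤ) {s t : ℕ} (hst : s ≤ t + 1)
    (hzero : ∀ i, s ≤ i → i ≤ t → x i = 0) :
    ∑ i ∈ Icc 1 t, x i = ∑ i ∈ Icc 1 (s - 1), x i := by
  refine (sum_subset (Icc_subset_Icc_right (by omega)) fun i hi hni => ?_).symm
  rw [mem_Icc] at hi hni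
  exact hzero i (by omega) hi.2

theorem Feasible.swap {T : ℕ} {A B x : ℕ → ℤ} (hx : Feasible T A B x) {s t' : ℕ}
    (hs1 : 1 ≤ s) (hst : s < t') (hs : x s = 0) (ht' : x t' = 1)
    (hslack : ∀ t ∈ Icc 1 T, s ≤ t → t < t' → ∑ i ∈ Icc 1 t, x i < B t) :
    Feasible T A B (fun t => if t = t' then 0 else if t = s then 1 else x t) := by
  refine ⟨fun t ht => ?_, fun t ht => ?_⟩
  · dsimp only
    split_ifs
    exacts [Or.inl rfl, Or.inr rfl, hx.1 t ht]
  · rw [sum_swap_eq_s10 _ x hst.ne hs ht']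
    obtain ⟨hlower, hupper⟩ := hx.2 t ht
    have hlow := (mem_Icc.mp ht).1
    simp only [mem_Icc]
    by_cases hmid : s ≤ t ∧ t < t'
    · have := hslack t ht hmid.1 hmid.2
      constructor <;> split_ifs <;> omega
    · constructor <;> split_ifs <;> omega

theorem stmt10_general (T : ℕ) (A B : ℕ → ℤ)
    (hB : Staircase T B)
    (xb : ℕ → ℤ) (hxb : Feasible T A B xb)
    (ts : ℕ) (hts : ts ∈ Finset.Icc 1 T) (hx0 : xb ts = 0)
    (hlt : A (ts - 1) < B ts)
    (hsum : ∑ i ∈ Finset.Icc 1 (ts - 1), xb i = A (ts - 1))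
    (hne : {t : ℕ | ts ≤ t ∧ t ∈ Finset.Icc 1 T ∧ xb t = 1}.Nonempty)
    (t' : ℕ) (ht' : t' = sInf {t : ℕ | ts ≤ t ∧ t ∈ Finset.Icc 1 T ∧ xb t = 1}) :
    Feasible T A B (fun t => if t = t' then 0 else if t = ts then 1 else xb t) := by
  set S : Set ℕ := {t : ℕ | ts ≤ t ∧ t ∈ Icc 1 T ∧ xb t = 1}
  obtain ⟨hts_le, ht'_mem, hxt'⟩ : t' ∈ S := ht' ▸ Nat.sInf_mem hne
  have hts_lt : ts < t' := hts_le.lt_of_ne (by rintro rfl; omega)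
  have hzero : ∀ i, ts ≤ i → i < t' → xb i = 0 := by
    intro i hi hit
    have hi_mem : i ∈ Icc 1 T := by simp only [mem_Icc] at hts ht'_mem ⊢; omega
    rcases hxb.1 i hi_mem with h | h
    · exact h
    · exact (Nat.notMem_of_lt_sInf (s := S) (ht' ▸ hit) ⟨hi, hi_mem, h⟩).elim
  refine hxb.swap (mem_Icc.mp hts).1 hts_lt hx0 hxt' fun t ht hst htt' => ?_
  rw [sum_Icc_eq_of_eq_zero xb (by omega) fun i hi hit => hzero i hi (by omega), hsum]
  exact hlt.trans_le (hB.mono hst (mem_Icc.mp ht).2)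

theorem stmt10 (T : ℕ) (A B : ℕ → ℤ)
    (hA : Staircase T A) (hB : Staircase T B)
    (xb : ℕ → ℤ) (hxb : Feasible T A B xb)
    (ts : ℕ) (hts : ts ∈ Finset.Icc 1 T) (hx0 : xb ts = 0)
    (hlt : A (ts - 1) < B ts)
    (hsum : ∑ i ∈ Finset.Icc 1 (ts - 1), xb i = A (ts - 1))
    (hne : {t : ℕ | ts ≤ t ∧ t ∈ Finset.Icc 1 T ∧ xb t = 1}.Nonempty)
    (t' : ℕ) (ht' : t' = sInf {t : ℕ | ts ≤ t ∧ t ∈ Finset.Icc 1 T ∧ xb t = 1}) :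
    Feasible T A B (fun t => if t = t' then 0 else if t = ts then 1 else xb t) :=
  stmt10_general T A B hB xb hxb ts hts hx0 hlt hsum hne t' ht'
end

section
/- Let T ≥ 1, H > 0 a real number, D_t ≥ 0 real demands for t ∈ {1,...,T}, and real bounds L_t ≤ U_t for t ∈ {1,...,T+1} with L_1 = U_1. A 0-1 sequence (x_t)_{t=1}^T together with states s_t defined by s_1 = L_1 and s_{t+1} = s_t + H·x_t − D_t satisfies L_t ≤ s_t ≤ U_t for all t ∈ {1,...,T+1} if and only if for every t ∈ {1,...,T}: ⌈(L_{t+1} − L_1 + Σ_{i=1}^t D_i)/H⌉ ≤ Σ_{i=1}^t x_i ≤ ⌊(U_{t+1} − L_1 + Σ_{i=1}^t D_i)/H⌋. -/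
theorem stmt11 (T : ℕ) (hT : 1 ≤ T) (H : ℝ) (hH : 0 < H)
    (D : ℕ → ℝ) (hD : ∀ t ∈ Finset.Icc 1 T, 0 ≤ D t)
    (L U : ℕ → ℝ) (hLU : ∀ t ∈ Finset.Icc 1 (T + 1), L t ≤ U t)
    (hinit : L 1 = U 1)
    (x : ℕ → ℤ) (hx : ∀ t ∈ Finset.Icc 1 T, x t = 0 ∨ x t = 1)
    (s : ℕ → ℝ) (hs1 : s 1 = L 1)
    (hrec : ∀ t ∈ Finset.Icc 1 T, s (t + 1) = s t + H * (x t : ℝ) - D t) :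
    (∀ t ∈ Finset.Icc 1 (T + 1), L t ≤ s t ∧ s t ≤ U t) ↔
    (∀ t ∈ Finset.Icc 1 T,
      ⌈(L (t + 1) - L 1 + ∑ i ∈ Finset.Icc 1 t, D i) / H⌉ ≤ ∑ i ∈ Finset.Icc 1 t, x i ∧
      ∑ i ∈ Finset.Icc 1 t, x i ≤ ⌊(U (t + 1) - L 1 + ∑ i ∈ Finset.Icc 1 t, D i) / H⌋) := by
  -- closed form for the state
  have key : ∀ t, 1 ≤ t → t ≤ T →
      s (t + 1) = L 1 + H * ((∑ i ∈ Finset.Icc 1 t, x i : ℤ) : ℝ)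
        - ∑ i ∈ Finset.Icc 1 t, D i := by
    intro t
    induction t with
    | zero => intro h; omega
    | succ n ih =>
      intro _ hle
      rcases Nat.eq_zero_or_pos n with hn | hn
      · subst hn
        simp only [Finset.Icc_self, Finset.sum_singleton]
        rw [hrec 1 (Finset.mem_Icc.mpr ⟨le_refl 1, hT⟩), hs1]

      · have hrec' := hrec (n + 1) (Finset.mem_Icc.mpr ⟨by omega, hle⟩)
        rw [hrec', ih hn (by omega)]
        rw [Finset.sum_Icc_succ_top (by omega : 1 ≤ n + 1) (fun i => x i),
            Finset.sum_Icc_succ_top (by omega : 1 ≤ n + 1) D]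
        push_cast
        ring
  -- equivalence at each step
  have equiv : ∀ t, 1 ≤ t → t ≤ T →
      ((L (t+1) ≤ s (t+1) ∧ s (t+1) ≤ U (t+1)) ↔
       (⌈(L (t + 1) - L 1 + ∑ i ∈ Finset.Icc 1 t, D i) / H⌉ ≤ ∑ i ∈ Finset.Icc 1 t, x i ∧
        ∑ i ∈ Finset.Icc 1 t, x i ≤ ⌊(U (t + 1) - L 1 + ∑ i ∈ Finset.Icc 1 t, D i) / H⌋)) := by
    intro t h1 h2
    rw [key t h1 h2, Int.ceil_le, Int.le_floor, div_le_iff₀ hH, le_div_iff₀ hH]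
    constructor
    · rintro ⟨ha, hb⟩
      constructor <;> nlinarith
    · rintro ⟨ha, hb⟩
      constructor <;> nlinarith
  constructor
  · intro h t ht
    rw [Finset.mem_Icc] at ht
    exact (equiv t ht.1 ht.2).mp (h (t+1) (Finset.mem_Icc.mpr ⟨by omega, by omega⟩))
  · intro h t ht
    rw [Finset.mem_Icc] at ht
    rcases Nat.eq_or_lt_of_le ht.1 with h1 | h1
    · rw [← h1, hs1]
      exact ⟨le_refl _, hinit ▸ le_refl _⟩
    · obtain ⟨u, rfl⟩ : ∃ u, t = u + 1 := ⟨t - 1, by omega⟩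
      exact (equiv u (by omega) (by omega)).mpr
        (h u (Finset.mem_Icc.mpr ⟨by omega, by omega⟩))
end

section
/- Let (A_t)_{t=0}^T, (B_t)_{t=0}^T be integer staircase sequences with A_t ≤ B_t for all t, and suppose all prices P_t are nonnegative. Then there exists an optimal feasible 0-1 solution (x_t) with Σ_{t=1}^T x_t = A_T. -/
open Finset

def prefixSum (x : ℕ → ℤ) (t : ℕ) : ℤ :=
  ∑ i ∈ Icc 1 t, x i

@[simp] lemma prefixSum_zero (x : ℕ → ℤ) : prefixSum x 0 = 0 := rfl

lemma prefixSum_succ (x : ℕ → ℤ) (t : ℕ) : prefixSum x (t + 1) = prefixSum x t + x (t + 1) :=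
  sum_Icc_succ_top (by omega) x

lemma prefixSum_sub_pred (f : ℕ → ℤ) (t : ℕ) :
    prefixSum (fun i => f i - f (i - 1)) t = f t - f 0 := by
  induction t with
  | zero => simp
  | succ n ih => rw [prefixSum_succ, ih, Nat.add_sub_cancel]; ring

lemma Staircase.monotoneOn {T : ℕ} {Z : ℕ → ℤ} (h : Staircase T Z) :
    MonotoneOn Z (Set.Iic T) :=
  monotoneOn_of_le_succ Set.ordConnected_Iic fun t _ _ ht =>
    (h.2 (t + 1) (mem_Icc.2 ⟨by omega, ht⟩)).1

lemma Staircase.nonneg {T : ℕ} {Z : ℕ → ℤ} (h : Staircase T Z) {t : ℕ} (ht : t ≤ T) : 0 ≤ Z t :=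
  h.1 ▸ h.monotoneOn (Nat.zero_le T) ht (Nat.zero_le t)

lemma Staircase.feasible_sub_pred {T : ℕ} {A B : ℕ → ℤ} (hA : Staircase T A)
    (hAB : ∀ t ∈ Icc 1 T, A t ≤ B t) : Feasible T A B (fun t => A t - A (t - 1)) := by
  refine ⟨fun t ht => ?_, fun t ht => ?_⟩
  · have := hA.2 t ht
    dsimp only
    omega
  · change A t ≤ prefixSum _ t ∧ prefixSum _ t ≤ B t
    rw [prefixSum_sub_pred, hA.1, sub_zero]
    exact ⟨le_rfl, hAB t ht⟩

def capAt (x : ℕ → ℤ) (C : ℤ) (t : ℕ) : ℤ :=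
  min (prefixSum x t) C - min (prefixSum x (t - 1)) C

lemma prefixSum_capAt (x : ℕ → ℤ) {C : ℤ} (hC : 0 ≤ C) (t : ℕ) :
    prefixSum (capAt x C) t = min (prefixSum x t) C := by
  unfold capAt
  rw [prefixSum_sub_pred (fun t => min (prefixSum x t) C), prefixSum_zero, min_eq_left hC,
    sub_zero]

lemma capAt_nonneg_and_le (x : ℕ → ℤ) (C : ℤ) {t : ℕ} (ht : 1 ≤ t) (hx : 0 ≤ x t) :
    0 ≤ capAt x C t ∧ capAt x C t ≤ x t := by
  obtain ⟨n, rfl⟩ := Nat.exists_eq_add_of_le' ht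
  have := prefixSum_succ x n
  simp only [capAt, Nat.add_sub_cancel]
  omega

lemma Binary.nonneg {T : ℕ} {x : ℕ → ℤ} (hx : Binary T x) {t : ℕ} (ht : t ∈ Icc 1 T) :
    0 ≤ x t := by
  rcases hx t ht with h | h <;> omega

lemma Binary.capAt {T : ℕ} {x : ℕ → ℤ} (hx : Binary T x) (C : ℤ) : Binary T (capAt x C) := by
  intro t ht
  have := capAt_nonneg_and_le x C (mem_Icc.1 ht).1 (hx.nonneg ht)
  rcases hx t ht with h | h <;> omega

lemma Feasible.capAt {T : ℕ} {A B y : ℕ → ℤ} (hA : Staircase T A) (hy : Feasible T A B y) :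
    Feasible T A B (capAt y (A T)) := by
  refine ⟨hy.1.capAt _, fun t ht => ?_⟩
  change A t ≤ prefixSum _ t ∧ prefixSum _ t ≤ B t
  rw [prefixSum_capAt y (hA.nonneg le_rfl)]
  have htT := (mem_Icc.1 ht).2
  have hAt : A t ≤ A T := hA.monotoneOn htT (le_refl T) htT
  exact ⟨le_min (hy.2 t ht).1 hAt, (min_le_left _ _).trans (hy.2 t ht).2⟩

lemma prefixSum_capAt_top {T : ℕ} {A B y : ℕ → ℤ} (hA : Staircase T A)
    (hy : Feasible T A B y) : prefixSum (capAt y (A T)) T = A T := by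
  rw [prefixSum_capAt y (hA.nonneg le_rfl), min_eq_right]
  rcases Nat.eq_zero_or_pos T with rfl | hT
  · simp [hA.1]
  · exact (hy.2 T (mem_Icc.2 ⟨hT, le_rfl⟩)).1

lemma cost_le_cost {T : ℕ} {P : ℕ → ℝ} {x y : ℕ → ℤ} (hP : ∀ t ∈ Icc 1 T, 0 ≤ P t)
    (hxy : ∀ t ∈ Icc 1 T, x t ≤ y t) : cost T P x ≤ cost T P y :=
  sum_le_sum fun t ht => mul_le_mul_of_nonneg_left (Int.cast_le.2 (hxy t ht)) (hP t ht)

lemma cost_eq_sum_filter {T : ℕ} {x : ℕ → ℤ} (hx : Binary T x) (P : ℕ → ℝ) :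
    cost T P x = ∑ t ∈ (Icc 1 T).filter (x · = 1), P t := by
  rw [sum_filter]
  refine sum_congr rfl fun t ht => ?_
  rcases hx t ht with h | h <;> simp [h]

lemma finite_cost_image_binary (T : ℕ) (P : ℕ → ℝ) : (cost T P '' {x | Binary T x}).Finite := by
  refine ((Icc 1 T).powerset.image fun s => ∑ t ∈ s, P t).finite_toSet.subset ?_
  rintro _ ⟨x, hx, rfl⟩
  simp only [coe_image, coe_powerset, Set.mem_image, Set.mem_preimage, Set.mem_powerset_iff]
  exact ⟨_, filter_subset _ _, (cost_eq_sum_filter hx P).symm⟩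

lemma exists_cost_minimizer {T : ℕ} (P : ℕ → ℝ) {F : Set (ℕ → ℤ)} (hF : ∀ x ∈ F, Binary T x)
    (hne : F.Nonempty) : ∃ y ∈ F, ∀ z ∈ F, cost T P y ≤ cost T P z := by
  obtain ⟨_, ⟨y, hy, rfl⟩, hmin⟩ := Set.exists_min_image _ id
    ((finite_cost_image_binary T P).subset (Set.image_mono hF)) (hne.image (cost T P))
  exact ⟨y, hy, fun z hz => hmin _ ⟨z, hz, rfl⟩⟩

theorem stmt13_general (T : ℕ) (A B : ℕ → ℤ) (P : ℕ → ℝ)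
    (hA : Staircase T A)
    (hAB : ∀ t ∈ Finset.Icc 1 T, A t ≤ B t)
    (hP : ∀ t ∈ Finset.Icc 1 T, 0 ≤ P t) :
    ∃ x : ℕ → ℤ, Feasible T A B x ∧ (∑ t ∈ Finset.Icc 1 T, x t) = A T ∧
      ∀ y : ℕ → ℤ, Feasible T A B y → cost T P x ≤ cost T P y := by
  obtain ⟨y, hy, hymin⟩ := exists_cost_minimizer P (F := {y | Feasible T A B y})
    (fun _ h => h.1) ⟨_, hA.feasible_sub_pred hAB⟩
  have hcap : cost T P (capAt y (A T)) ≤ cost T P y :=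
    cost_le_cost hP fun t ht => (capAt_nonneg_and_le y _ (mem_Icc.1 ht).1 (hy.1.nonneg ht)).2
  exact ⟨capAt y (A T), hy.capAt hA, prefixSum_capAt_top hA hy,
    fun z hz => hcap.trans (hymin z hz)⟩

theorem stmt13 (T : ℕ) (A B : ℕ → ℤ) (P : ℕ → ℝ)
    (hA : Staircase T A) (hB : Staircase T B)
    (hAB : ∀ t ∈ Finset.Icc 1 T, A t ≤ B t)
    (hP : ∀ t ∈ Finset.Icc 1 T, 0 ≤ P t) :
    ∃ x : ℕ → ℤ, Feasible T A B x ∧ (∑ t ∈ Finset.Icc 1 T, x t) = A T ∧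
      ∀ y : ℕ → ℤ, Feasible T A B y → cost T P x ≤ cost T P y :=
  stmt13_general T A B P hA hAB hP
end

section
/- Let (A_t)_{t=0}^T, (B_t)_{t=0}^T be integer staircase sequences with A_t ≤ B_t for all t, let (P_t) be real prices, and let (x̄_t) be a feasible 0-1 solution. Suppose t* satisfies the greedy condition (A_{t*−1} < B_{t*} and (A_{t*−1} < A_T or P_{t*} < 0)) with P_{t*} minimal among all intervals satisfying the greedy condition. Then there exists a feasible 0-1 solution (x̂_t) with x̂_{t*} = 1 and Σ_t P_t x̂_t ≤ Σ_t P_t x̄_t. -/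
lemma mono_of_staircase {T : ℕ} {Z : ℕ → ℤ} (h : Staircase T Z) :
    ∀ s t : ℕ, s ≤ t → t ≤ T → Z s ≤ Z t := by
  intro s t hst htT
  induction t with
  | zero =>
    have : s = 0 := Nat.le_zero.mp hst
    subst this; exact le_rfl
  | succ n ih =>
    rcases Nat.lt_or_ge s (n+1) with hlt | hge
    · have h1 : Z s ≤ Z n := ih (by omega) (by omega)
      have h2 := (h.2 (n+1) (Finset.mem_Icc.mpr ⟨by omega, htT⟩)).1
      simp only [Nat.add_sub_cancel] at h2
      omega
    · have : s = n + 1 := by omega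
      subst this; exact le_rfl

lemma sum_split (xb : ℕ → ℤ) (s t : ℕ) (hst : s ≤ t) :
    ∑ i ∈ Finset.Icc 1 t, xb i
      = (∑ i ∈ Finset.Icc 1 s, xb i) + ∑ i ∈ Finset.Ioc s t, xb i := by
  rw [show (1:ℕ) = 0 + 1 from rfl, Finset.Icc_add_one_left_eq_Ioc, Finset.Icc_add_one_left_eq_Ioc]
  exact (Finset.sum_Ioc_consecutive _ (Nat.zero_le s) hst).symm

section Swap
variable (T : ℕ) (P : ℕ → ℝ) (xb : ℕ → ℤ) (ts u : ℕ)

lemma swap_sums (h1ts : 1 ≤ ts) (h1u : 1 ≤ u) (hne : u ≠ ts)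
    (hxts : xb ts = 0) (hxu : xb u = 1) (t : ℕ) :
    ∑ i ∈ Finset.Icc 1 t, (if i = u then 0 else if i = ts then 1 else xb i)
      = (∑ i ∈ Finset.Icc 1 t, xb i)
        + (if ts ≤ t then 1 else 0) - (if u ≤ t then 1 else 0) := by
  have hpt : ∀ i, (if i = u then (0:ℤ) else if i = ts then 1 else xb i)
      = xb i + (if i = ts then 1 - xb i else 0) + (if i = u then -xb i else 0) := by
    intro i
    by_cases hiu : i = u
    · subst hiu
      simp [hne, hxu]
    · by_cases hits : i = ts
      · subst hits; simp [hiu]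
      · simp [hiu, hits]
  simp only [hpt]
  rw [Finset.sum_add_distrib, Finset.sum_add_distrib, Finset.sum_ite_eq',
    Finset.sum_ite_eq']
  by_cases h1 : ts ≤ t <;> by_cases h2 : u ≤ t <;>
    simp [Finset.mem_Icc, h1, h2, h1ts, h1u, hxts, hxu] <;> ring

lemma swap_cost (htsT : ts ∈ Finset.Icc 1 T) (huT : u ∈ Finset.Icc 1 T)
    (hne : u ≠ ts) (hxts : xb ts = 0) (hxu : xb u = 1) :
    cost T P (fun i => if i = u then 0 else if i = ts then 1 else xb i)
      = cost T P xb + P ts - P u := by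
  unfold cost
  have hpt : ∀ i, P i * (((if i = u then (0:ℤ) else if i = ts then 1 else xb i) : ℤ) : ℝ)
      = P i * (xb i : ℝ) + (if i = ts then P i else 0) - (if i = u then P i else 0) := by
    intro i
    by_cases hiu : i = u
    · subst hiu
      simp [if_neg hne, hxu, hne]
    · by_cases hits : i = ts
      · subst hits; simp [hiu, hxts]
      · simp [hiu, hits]
  simp only [hpt]
  rw [Finset.sum_sub_distrib, Finset.sum_add_distrib, Finset.sum_ite_eq',
    Finset.sum_ite_eq', if_pos htsT, if_pos huT]

lemma ins_sums (h1ts : 1 ≤ ts) (hxts : xb ts = 0) (t : ℕ) :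
    ∑ i ∈ Finset.Icc 1 t, (if i = ts then 1 else xb i)
      = (∑ i ∈ Finset.Icc 1 t, xb i) + (if ts ≤ t then 1 else 0) := by
  have hpt : ∀ i, (if i = ts then (1:ℤ) else xb i)
      = xb i + (if i = ts then 1 - xb i else 0) := by
    intro i
    by_cases hits : i = ts
    · subst hits; simp
    · simp [hits]
  simp only [hpt]
  rw [Finset.sum_add_distrib, Finset.sum_ite_eq']
  by_cases h1 : ts ≤ t <;> simp [Finset.mem_Icc, h1, h1ts, hxts]

lemma ins_cost (htsT : ts ∈ Finset.Icc 1 T) (hxts : xb ts = 0) :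
    cost T P (fun i => if i = ts then 1 else xb i) = cost T P xb + P ts := by
  unfold cost
  have hpt : ∀ i, P i * (((if i = ts then (1:ℤ) else xb i) : ℤ) : ℝ)
      = P i * (xb i : ℝ) + (if i = ts then P i else 0) := by
    intro i
    by_cases hits : i = ts
    · subst hits; simp [hxts]
    · simp [hits]
  simp only [hpt]
  rw [Finset.sum_add_distrib, Finset.sum_ite_eq', if_pos htsT]

end Swap

theorem stmt18 (T : ℕ) (A B : ℕ → ℤ) (P : ℕ → ℝ)
    (hA : Staircase T A) (hB : Staircase T B)
    (hAB : ∀ t ∈ Finset.Icc 1 T, A t ≤ B t)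
    (xb : ℕ → ℤ) (hxb : Feasible T A B xb)
    (ts : ℕ) (hts : ts ∈ Finset.Icc 1 T)
    (hgreedy : A (ts - 1) < B ts ∧ (A (ts - 1) < A T ∨ P ts < 0))
    (hmin : ∀ t ∈ Finset.Icc 1 T,
      (A (t - 1) < B t ∧ (A (t - 1) < A T ∨ P t < 0)) → P ts ≤ P t) :
    ∃ xh : ℕ → ℤ, Feasible T A B xh ∧ xh ts = 1 ∧ cost T P xh ≤ cost T P xb := by
  classical
  obtain ⟨hts1, htsT⟩ := Finset.mem_Icc.mp hts
  obtain ⟨hbin, hfeas⟩ := hxb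
  by_cases hx1 : xb ts = 1
  · exact ⟨xb, ⟨hbin, hfeas⟩, hx1, le_rfl⟩
  have hx0 : xb ts = 0 := by
    rcases hbin ts hts with h | h
    · exact h
    · exact absurd h hx1
  have hAmono := mono_of_staircase hA
  have hBmono := mono_of_staircase hB
  have hfA : ∀ t, t ≤ T → A t ≤ ∑ i ∈ Finset.Icc 1 t, xb i := by
    intro t htT
    rcases Nat.eq_zero_or_pos t with rfl | h1
    · simp [hA.1]
    · exact (hfeas t (Finset.mem_Icc.mpr ⟨h1, htT⟩)).1
  have hfB : ∀ t, t ≤ T → (∑ i ∈ Finset.Icc 1 t, xb i) ≤ B t := by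
    intro t htT
    rcases Nat.eq_zero_or_pos t with rfl | h1
    · simp [hB.1]
    · exact (hfeas t (Finset.mem_Icc.mpr ⟨h1, htT⟩)).2
  have hzero : ∀ s t : ℕ, s ≤ t → (∀ i, s < i → i ≤ t → xb i = 0) →
      ∑ i ∈ Finset.Icc 1 t, xb i = ∑ i ∈ Finset.Icc 1 s, xb i := by
    intro s t hst hz
    rw [sum_split xb s t hst]
    have h0 : ∑ i ∈ Finset.Ioc s t, xb i = 0 :=
      Finset.sum_eq_zero (fun i hi =>
        hz i (Finset.mem_Ioc.mp hi).1 (Finset.mem_Ioc.mp hi).2)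
    rw [h0, add_zero]
  have hone : ∀ s t : ℕ, s ≤ t → t ≤ T →
      (∑ i ∈ Finset.Icc 1 s, xb i) < (∑ i ∈ Finset.Icc 1 t, xb i) →
      ∃ u, s < u ∧ u ≤ t ∧ xb u = 1 := by
    intro s t hst htT hlt
    by_contra hno
    push_neg at hno
    have heq : ∑ i ∈ Finset.Icc 1 t, xb i = ∑ i ∈ Finset.Icc 1 s, xb i := by
      refine hzero s t hst (fun i h1 h2 => ?_)
      rcases hbin i (Finset.mem_Icc.mpr ⟨by omega, by omega⟩) with h | h
      · exact h
      · exact absurd h (hno i h1 h2)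
    omega
  have hSts : ∑ i ∈ Finset.Icc 1 ts, xb i = ∑ i ∈ Finset.Icc 1 (ts-1), xb i := by
    refine hzero (ts-1) ts (by omega) (fun i h1 h2 => ?_)
    have : i = ts := by omega
    subst this; exact hx0
  by_cases hcase : A (ts-1) < ∑ i ∈ Finset.Icc 1 (ts-1), xb i
  · -- Case A: swap with an earlier index u < ts
    obtain ⟨v, hvmem, hvmax⟩ :
        ∃ v ∈ (Finset.Icc 0 (ts-1)).filter
            (fun t => A t = ∑ i ∈ Finset.Icc 1 t, xb i),
          ∀ t ∈ (Finset.Icc 0 (ts-1)).filter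
            (fun t => A t = ∑ i ∈ Finset.Icc 1 t, xb i), t ≤ v := by
      have hWne : ((Finset.Icc 0 (ts-1)).filter
          (fun t => A t = ∑ i ∈ Finset.Icc 1 t, xb i)).Nonempty :=
        ⟨0, Finset.mem_filter.mpr ⟨Finset.mem_Icc.mpr ⟨le_rfl, Nat.zero_le _⟩,
          by simp [hA.1]⟩⟩
      exact ⟨_, Finset.max'_mem _ hWne, fun t ht => Finset.le_max' _ t ht⟩
    obtain ⟨hvmem', hvA⟩ := Finset.mem_filter.mp hvmem
    have hvle : v ≤ ts - 1 := (Finset.mem_Icc.mp hvmem').2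
    have hgt : ∀ t, v < t → t ≤ ts - 1 → A t < ∑ i ∈ Finset.Icc 1 t, xb i := by
      intro t h1 h2
      have hle : A t ≤ ∑ i ∈ Finset.Icc 1 t, xb i := hfA t (by omega)
      rcases lt_or_eq_of_le hle with h | h
      · exact h
      · exfalso
        have ht : t ∈ (Finset.Icc 0 (ts-1)).filter
            (fun t => A t = ∑ i ∈ Finset.Icc 1 t, xb i) :=
          Finset.mem_filter.mpr ⟨Finset.mem_Icc.mpr ⟨Nat.zero_le _, h2⟩, h⟩
        have := hvmax t ht
        omega
    have hvlt : v < ts - 1 := by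
      rcases lt_or_eq_of_le hvle with h | h
      · exact h
      · exfalso; rw [h] at hvA; omega
    have hSvlt : (∑ i ∈ Finset.Icc 1 v, xb i) < ∑ i ∈ Finset.Icc 1 (ts-1), xb i := by
      have := hAmono v (ts-1) (by omega) (by omega)
      omega
    obtain ⟨u, hu1, hu2, hxu⟩ := hone v (ts-1) (by omega) (by omega) hSvlt
    have hu1T : 1 ≤ u := by omega
    have huT : u ≤ T := by omega
    have hne : u ≠ ts := by omega
    have humem : u ∈ Finset.Icc 1 T := Finset.mem_Icc.mpr ⟨hu1T, huT⟩
    have hgu : A (u-1) < B u := by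
      have h1 : A (u-1) ≤ A u := hAmono (u-1) u (by omega) huT
      have h2 : A u < ∑ i ∈ Finset.Icc 1 u, xb i := hgt u hu1 hu2
      have h3 : (∑ i ∈ Finset.Icc 1 u, xb i) ≤ B u := hfB u huT
      omega
    have hPu : P ts ≤ P u := by
      rcases hgreedy.2 with hAT | hPn
      · refine hmin u humem ⟨hgu, Or.inl ?_⟩
        have : A (u-1) ≤ A (ts-1) := hAmono (u-1) (ts-1) (by omega) (by omega)
        omega
      · by_cases hpu : P u < 0
        · exact hmin u humem ⟨hgu, Or.inr hpu⟩
        · linarith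
    refine ⟨fun i => if i = u then 0 else if i = ts then 1 else xb i,
      ⟨?_, ?_⟩, by simp [Ne.symm hne], ?_⟩
    · intro t ht
      by_cases h1 : t = u
      · left; simp [h1]
      · by_cases h2 : t = ts
        · right; simp [h1, h2, Ne.symm hne]
        · simpa [h1, h2] using hbin t ht
    · intro t ht
      obtain ⟨ht1, htT'⟩ := Finset.mem_Icc.mp ht
      rw [swap_sums xb ts u hts1 hu1T hne hx0 hxu t]
      obtain ⟨hfa, hfb⟩ := hfeas t ht
      by_cases htst : ts ≤ t
      · have hut : u ≤ t := by omega
        simp only [if_pos htst, if_pos hut]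
        constructor <;> linarith
      · by_cases hut : u ≤ t
        · have h3 : A t < ∑ i ∈ Finset.Icc 1 t, xb i := hgt t (by omega) (by omega)
          simp only [if_pos hut, if_neg htst]
          constructor <;> linarith
        · simp only [if_neg hut, if_neg htst]
          constructor <;> linarith
    · rw [swap_cost T P xb ts u hts humem hne hx0 hxu]
      linarith
  · -- Case B: prefix sum equals A (ts-1)
    have hSeq : (∑ i ∈ Finset.Icc 1 (ts-1), xb i) = A (ts-1) := by
      have := hfA (ts-1) (by omega)
      omega
    by_cases hex : ∃ u, ts < u ∧ u ≤ T ∧ xb u = 1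
    · -- Case B1: swap with the first later index u > ts having xb u = 1
      set u := Nat.find hex with hu
      obtain ⟨huts, huT, hxu⟩ := Nat.find_spec hex
      have hmin' : ∀ i, i < u → ¬(ts < i ∧ i ≤ T ∧ xb i = 1) := fun i hi => Nat.find_min hex hi
      have hzmid : ∀ i, ts - 1 < i → i ≤ u - 1 → xb i = 0 := by
        intro i h1 h2
        rcases Nat.eq_or_lt_of_le (show ts ≤ i by omega) with h | h
        · rw [← h]; exact hx0
        · rcases hbin i (Finset.mem_Icc.mpr ⟨by omega, by omega⟩) with h' | h'
          · exact h'
          · exact absurd ⟨h, by omega, h'⟩ (hmin' i (by omega))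
      have hSconst : ∀ t, ts - 1 ≤ t → t ≤ u - 1 →
          (∑ i ∈ Finset.Icc 1 t, xb i) = A (ts-1) := by
        intro t h1 h2
        rw [hzero (ts-1) t h1 (fun i hi1 hi2 => hzmid i hi1 (by omega)), hSeq]
      have hu1T : 1 ≤ u := by omega
      have hne : u ≠ ts := by omega
      have humem : u ∈ Finset.Icc 1 T := Finset.mem_Icc.mpr ⟨hu1T, huT⟩
      have hSum1 : A (u-1) ≤ A (ts-1) := by
        have h1 : A (u-1) ≤ ∑ i ∈ Finset.Icc 1 (u-1), xb i := hfA (u-1) (by omega)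
        have h2 := hSconst (u-1) (by omega) le_rfl
        omega
      have hgu : A (u-1) < B u := by
        have h2 : B ts ≤ B u := hBmono ts u (by omega) huT
        have := hgreedy.1
        omega
      have hPu : P ts ≤ P u := by
        rcases hgreedy.2 with hAT | hPn
        · exact hmin u humem ⟨hgu, Or.inl (by omega)⟩
        · by_cases hpu : P u < 0
          · exact hmin u humem ⟨hgu, Or.inr hpu⟩
          · linarith
      refine ⟨fun i => if i = u then 0 else if i = ts then 1 else xb i,
        ⟨?_, ?_⟩, by simp [Ne.symm hne], ?_⟩
      · intro t ht
        by_cases h1 : t = u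
        · left; simp [h1]
        · by_cases h2 : t = ts
          · right; simp [h1, h2, Ne.symm hne]
          · simpa [h1, h2] using hbin t ht
      · intro t ht
        obtain ⟨ht1, htT'⟩ := Finset.mem_Icc.mp ht
        rw [swap_sums xb ts u hts1 hu1T hne hx0 hxu t]
        obtain ⟨hfa, hfb⟩ := hfeas t ht
        by_cases hut : u ≤ t
        · have htst : ts ≤ t := by omega
          simp only [if_pos htst, if_pos hut]
          constructor <;> linarith
        · by_cases htst : ts ≤ t
          · have h3 : (∑ i ∈ Finset.Icc 1 t, xb i) = A (ts-1) :=
              hSconst t (by omega) (by omega)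
            have h4 : B ts ≤ B t := hBmono ts t htst htT'
            have := hgreedy.1
            simp only [if_pos htst, if_neg hut]
            constructor <;> linarith
          · simp only [if_neg hut, if_neg htst]
            constructor <;> linarith
      · rw [swap_cost T P xb ts u hts humem hne hx0 hxu]
        linarith
    · -- Case B2: insertion, P ts < 0
      push_neg at hex
      have hzall : ∀ i, ts - 1 < i → i ≤ T → xb i = 0 := by
        intro i h1 h2
        rcases Nat.eq_or_lt_of_le (show ts ≤ i by omega) with h | h
        · rw [← h]; exact hx0
        · rcases hbin i (Finset.mem_Icc.mpr ⟨by omega, h2⟩) with h' | h'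
          · exact h'
          · exact absurd h' (hex i h h2)
      have hSconst : ∀ t, ts - 1 ≤ t → t ≤ T →
          (∑ i ∈ Finset.Icc 1 t, xb i) = A (ts-1) := by
        intro t h1 h2
        rw [hzero (ts-1) t h1 (fun i hi1 hi2 => hzall i hi1 (by omega)), hSeq]
      have hATeq : A T ≤ A (ts-1) := by
        have h1 := hfA T le_rfl
        have h2 := hSconst T (by omega) le_rfl
        omega
      have hPn : P ts < 0 := by
        rcases hgreedy.2 with hAT | hPn
        · omega
        · exact hPn
      refine ⟨fun i => if i = ts then 1 else xb i, ⟨?_, ?_⟩, by simp, ?_⟩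
      · intro t ht
        by_cases h2 : t = ts
        · right; simp [h2]
        · simpa [h2] using hbin t ht
      · intro t ht
        obtain ⟨ht1, htT'⟩ := Finset.mem_Icc.mp ht
        rw [ins_sums xb ts hts1 hx0 t]
        obtain ⟨hfa, hfb⟩ := hfeas t ht
        by_cases htst : ts ≤ t
        · have h3 : (∑ i ∈ Finset.Icc 1 t, xb i) = A (ts-1) :=
            hSconst t (by omega) htT'
          have h4 : B ts ≤ B t := hBmono ts t htst htT'
          have := hgreedy.1
          simp only [if_pos htst]
          constructor <;> linarith
        · simp only [if_neg htst]
          constructor <;> linarith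
      · rw [ins_cost T P xb ts hts hx0]
        linarith
end
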